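/- On the reference triangle T̂ = conv{(0,0),(1,0),(0,1)}, the interpolant of v̂=(0,x1³) defined by the original BDM degrees of freedom (edge moments against P₂, ∫_T Iv·∇z = ∫_T v·∇z for z ∈ P₁, and ∫_T Iv·z = ∫_T v·z for z ∈ Q₂) equals w = ((3/140)x1(1−x1−2x2), 1/20 − (3/5)x1 + (3/2)x1² − (3/140)x2(1−2x1−x2)). In particular its first component is not identically zero. -/
import Mathlib


open MeasureTheory intervalIntegral

/-- The reference triangle `T̂ = conv{(0,0),(1,0),(0,1)}`. -/
def refTri : Set (ℝ × ℝ) := {p | 0 ≤ p.1 ∧ 0 ≤ p.2 ∧ p.1 + p.2 ≤ 1}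

/-- `v̂ = (0, x₁³)`. -/
def vhat : ℝ × ℝ → ℝ × ℝ := fun p => (0, p.1 ^ 3)

/-- The interpolant of `v̂` given by the original Brezzi–Douglas–Marini degrees of freedom:
`w = ((3/140)x₁(1-x₁-2x₂), 1/20 - (3/5)x₁ + (3/2)x₁² - (3/140)x₂(1-2x₁-x₂))`. -/
noncomputable def wOrig : ℝ × ℝ → ℝ × ℝ := fun p =>
  (3 / 140 * p.1 * (1 - p.1 - 2 * p.2),
    1 / 20 - 3 / 5 * p.1 + 3 / 2 * p.1 ^ 2 - 3 / 140 * p.2 * (1 - 2 * p.1 - p.2))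

/-- The divergence-free bubble field spanning `Q₂(T̂)`:
`z₀ = curl(x₁x₂(1-x₁-x₂)) = (x₁ - x₁² - 2x₁x₂, -(x₂ - 2x₁x₂ - x₂²))`, which lies in
`(P₂)²`, has zero divergence and zero normal trace on `∂T̂`. -/
def zQ : ℝ × ℝ → ℝ × ℝ := fun p =>
  (p.1 - p.1 ^ 2 - 2 * p.1 * p.2, -(p.2 - 2 * p.1 * p.2 - p.2 ^ 2))

/-- Edge flux moment (see previous statements): the rotated direction vector serves as
area-weighted outward normal for the counterclockwise-oriented triangle. -/
noncomputable def edgeMoment (F : ℝ × ℝ → ℝ × ℝ) (a b : ℝ × ℝ) (z : ℝ → ℝ) : ℝ :=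
  ∫ t in (0:ℝ)..1,
    ((F (a + t • (b - a))).1 * (b - a).2 - (F (a + t • (b - a))).2 * (b - a).1) * z t

lemma intPoly (b a0 a1 a2 a3 a4 a5 a6 : ℝ) :
    ∫ t in (0:ℝ)..b,
        (a0 + a1 * t + a2 * t ^ 2 + a3 * t ^ 3 + a4 * t ^ 4 + a5 * t ^ 5 + a6 * t ^ 6) =
      a0 * b + a1 * b ^ 2 / 2 + a2 * b ^ 3 / 3 + a3 * b ^ 4 / 4 + a4 * b ^ 5 / 5 +
        a5 * b ^ 6 / 6 + a6 * b ^ 7 / 7 := by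
  have J : ∀ f : ℝ → ℝ, Continuous f → IntervalIntegrable f volume 0 b :=
    fun f hf => hf.intervalIntegrable _ _
  have h6 : (∫ t in (0:ℝ)..b,
      (a0 + a1 * t + a2 * t ^ 2 + a3 * t ^ 3 + a4 * t ^ 4 + a5 * t ^ 5 + a6 * t ^ 6)) =
      (∫ t in (0:ℝ)..b, (a0 + a1 * t + a2 * t ^ 2 + a3 * t ^ 3 + a4 * t ^ 4 + a5 * t ^ 5)) +
        ∫ t in (0:ℝ)..b, a6 * t ^ 6 :=
    intervalIntegral.integral_add (J _ (by fun_prop)) (J _ (by fun_prop))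
  have h5 : (∫ t in (0:ℝ)..b,
      (a0 + a1 * t + a2 * t ^ 2 + a3 * t ^ 3 + a4 * t ^ 4 + a5 * t ^ 5)) =
      (∫ t in (0:ℝ)..b, (a0 + a1 * t + a2 * t ^ 2 + a3 * t ^ 3 + a4 * t ^ 4)) +
        ∫ t in (0:ℝ)..b, a5 * t ^ 5 :=
    intervalIntegral.integral_add (J _ (by fun_prop)) (J _ (by fun_prop))
  have h4 : (∫ t in (0:ℝ)..b, (a0 + a1 * t + a2 * t ^ 2 + a3 * t ^ 3 + a4 * t ^ 4)) =
      (∫ t in (0:ℝ)..b, (a0 + a1 * t + a2 * t ^ 2 + a3 * t ^ 3)) +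
        ∫ t in (0:ℝ)..b, a4 * t ^ 4 :=
    intervalIntegral.integral_add (J _ (by fun_prop)) (J _ (by fun_prop))
  have h3 : (∫ t in (0:ℝ)..b, (a0 + a1 * t + a2 * t ^ 2 + a3 * t ^ 3)) =
      (∫ t in (0:ℝ)..b, (a0 + a1 * t + a2 * t ^ 2)) + ∫ t in (0:ℝ)..b, a3 * t ^ 3 :=
    intervalIntegral.integral_add (J _ (by fun_prop)) (J _ (by fun_prop))
  have h2 : (∫ t in (0:ℝ)..b, (a0 + a1 * t + a2 * t ^ 2)) =
      (∫ t in (0:ℝ)..b, (a0 + a1 * t)) + ∫ t in (0:ℝ)..b, a2 * t ^ 2 :=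
    intervalIntegral.integral_add (J _ (by fun_prop)) (J _ (by fun_prop))
  have h1 : (∫ t in (0:ℝ)..b, (a0 + a1 * t)) =
      (∫ t in (0:ℝ)..b, a0) + ∫ t in (0:ℝ)..b, a1 * t :=
    intervalIntegral.integral_add (J _ (by fun_prop)) (J _ (by fun_prop))
  have hm : ∀ (c : ℝ) (n : ℕ), (∫ t in (0:ℝ)..b, c * t ^ n) = c * b ^ (n + 1) / (n + 1) := by
    intro c n
    rw [intervalIntegral.integral_const_mul, integral_pow]
    simp
    ring
  have hid : (∫ t in (0:ℝ)..b, a1 * t) = a1 * b ^ 2 / 2 := by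
    rw [intervalIntegral.integral_const_mul, integral_id]
    ring
  rw [h6, h5, h4, h3, h2, h1, intervalIntegral.integral_const, hid, hm, hm, hm, hm, hm]
  simp only [smul_eq_mul]
  push_cast
  ring

lemma triInt (f : ℝ × ℝ → ℝ) (hf : Continuous f) :
    ∫ p in refTri, f p = ∫ x in (0:ℝ)..1, ∫ y in (0:ℝ)..(1 - x), f (x, y) := by
  have hclosed : IsClosed refTri := by
    have : refTri = {p : ℝ × ℝ | 0 ≤ p.1} ∩ ({p | 0 ≤ p.2} ∩ {p | p.1 + p.2 ≤ 1}) := rfl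
    rw [this]
    exact (isClosed_le continuous_const continuous_fst).inter
      ((isClosed_le continuous_const continuous_snd).inter
        (isClosed_le (continuous_fst.add continuous_snd) continuous_const))
  have hm : MeasurableSet refTri := hclosed.measurableSet
  have hsub : refTri ⊆ Set.Icc ((0 : ℝ), (0 : ℝ)) (1, 1) := by
    rintro ⟨px, py⟩ ⟨h1, h2, h3⟩
    have h1' : (0:ℝ) ≤ px := h1
    have h2' : (0:ℝ) ≤ py := h2
    have h3' : px + py ≤ 1 := h3
    exact Set.mem_Icc.mpr ⟨Prod.mk_le_mk.mpr ⟨h1', h2'⟩, Prod.mk_le_mk.mpr ⟨by linarith, by linarith⟩⟩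
  have hcpt : IsCompact refTri := isCompact_Icc.of_isClosed_subset hclosed hsub
  have hInt : Integrable (refTri.indicator f) :=
    (hf.continuousOn.integrableOn_compact hcpt).integrable_indicator hm
  rw [← MeasureTheory.integral_indicator hm]
  rw [show (volume : Measure (ℝ × ℝ)) = (volume : Measure ℝ).prod volume from rfl] at hInt ⊢
  rw [MeasureTheory.integral_prod _ hInt]
  have key : ∀ x : ℝ, (∫ y, refTri.indicator f (x, y)) =
      Set.indicator (Set.Icc (0:ℝ) 1) (fun x => ∫ y in (0:ℝ)..(1 - x), f (x, y)) x := by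
    intro x
    by_cases hx : x ∈ Set.Icc (0:ℝ) 1
    · rw [Set.indicator_of_mem hx]
      have hpt : ∀ y : ℝ, refTri.indicator f (x, y) =
          (Set.Icc (0:ℝ) (1 - x)).indicator (fun y => f (x, y)) y := by
        intro y
        by_cases hy : y ∈ Set.Icc (0:ℝ) (1 - x)
        · rw [Set.indicator_of_mem hy]
          rw [Set.indicator_of_mem]
          exact ⟨hx.1, hy.1, by have := hy.2; simp only; linarith⟩
        · rw [Set.indicator_of_notMem hy, Set.indicator_of_notMem]
          intro hmem
          exact hy ⟨hmem.2.1, by have := hmem.2.2; simp only at this ⊢; linarith⟩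
      simp only [hpt]
      rw [MeasureTheory.integral_indicator measurableSet_Icc,
        MeasureTheory.integral_Icc_eq_integral_Ioc,
        ← intervalIntegral.integral_of_le (by linarith [hx.2] : (0:ℝ) ≤ 1 - x)]
    · rw [Set.indicator_of_notMem hx]
      have hpt : ∀ y : ℝ, refTri.indicator f (x, y) = 0 := by
        intro y
        apply Set.indicator_of_notMem
        rintro ⟨h1, h2, h3⟩
        simp only at h1 h2 h3
        simp only [Set.mem_Icc, not_and, not_le] at hx
        rcases lt_or_ge x 0 with h | h
        · linarith
        · have := hx h1; linarith
      simp [hpt]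
  simp only [key]
  rw [MeasureTheory.integral_indicator measurableSet_Icc,
    MeasureTheory.integral_Icc_eq_integral_Ioc,
    ← intervalIntegral.integral_of_le zero_le_one]

/-- On `T̂`, the field `wOrig` has all *original* BDM₂ degrees of freedom of `v̂ = (0,x₁³)`:
edge normal moments against `P₂(e)`, interior moments against gradients `∇z`, `z ∈ P₁`
(i.e. against all constant vector fields), and interior moments against
`Q₂ = {z ∈ (P₂)² : div z = 0, z·n|∂T̂ = 0} = span{zQ}`; hence `wOrig` is the interpolant of
`v̂` for the original BDM degrees of freedom.  In particular its first component is *not*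
identically zero. -/
theorem wOrig_is_original_BDM2_interpolant :
    (∀ c0 c1 c2 : ℝ,
      edgeMoment wOrig (0, 0) (1, 0) (fun t => c0 + c1 * t + c2 * t ^ 2) =
        edgeMoment vhat (0, 0) (1, 0) (fun t => c0 + c1 * t + c2 * t ^ 2)) ∧
    (∀ c0 c1 c2 : ℝ,
      edgeMoment wOrig (1, 0) (0, 1) (fun t => c0 + c1 * t + c2 * t ^ 2) =
        edgeMoment vhat (1, 0) (0, 1) (fun t => c0 + c1 * t + c2 * t ^ 2)) ∧
    (∀ c0 c1 c2 : ℝ,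
      edgeMoment wOrig (0, 1) (0, 0) (fun t => c0 + c1 * t + c2 * t ^ 2) =
        edgeMoment vhat (0, 1) (0, 0) (fun t => c0 + c1 * t + c2 * t ^ 2)) ∧
    (∀ a b : ℝ,
      (∫ p in refTri, ((wOrig p).1 * a + (wOrig p).2 * b)) =
        ∫ p in refTri, ((vhat p).1 * a + (vhat p).2 * b)) ∧
    (∀ γ : ℝ,
      (∫ p in refTri, ((wOrig p).1 * (γ * (zQ p).1) + (wOrig p).2 * (γ * (zQ p).2))) =
        ∫ p in refTri, ((vhat p).1 * (γ * (zQ p).1) + (vhat p).2 * (γ * (zQ p).2))) ∧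
    (∃ p : ℝ × ℝ, (wOrig p).1 ≠ 0) := by
  refine ⟨?_, ?_, ?_, ?_, ?_, ⟨(1/2, 0), by norm_num [wOrig]⟩⟩
  · intro c0 c1 c2
    unfold edgeMoment wOrig vhat
    simp only [Prod.mk_sub_mk, Prod.smul_mk, Prod.mk_add_mk, smul_eq_mul]
    trans (∫ t in (0:ℝ)..1, ((((-1)/20)*c0) + (((-1)/20)*c1 + (3/5)*c0) * t + (((-1)/20)*c2 + (3/5)*c1 + ((-3)/2)*c0) * t^2 + ((3/5)*c2 + ((-3)/2)*c1) * t^3 + (((-3)/2)*c2) * t^4 + (0:ℝ) * t^5 + (0:ℝ) * t^6))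
    · exact intervalIntegral.integral_congr fun t _ => by ring
    trans (∫ t in (0:ℝ)..1, ((0:ℝ) + (0:ℝ) * t + (0:ℝ) * t^2 + ((-1)*c0) * t^3 + ((-1)*c1) * t^4 + ((-1)*c2) * t^5 + (0:ℝ) * t^6))
    · simp only [intPoly]; try ring
    · exact (intervalIntegral.integral_congr fun t _ => by ring).symm
  · intro c0 c1 c2
    unfold edgeMoment wOrig vhat
    simp only [Prod.mk_sub_mk, Prod.smul_mk, Prod.mk_add_mk, smul_eq_mul]
    trans (∫ t in (0:ℝ)..1, (((19/20)*c0) + ((19/20)*c1 + ((-12)/5)*c0) * t + ((19/20)*c2 + ((-12)/5)*c1 + (3/2)*c0) * t^2 + (((-12)/5)*c2 + (3/2)*c1) * t^3 + ((3/2)*c2) * t^4 + (0:ℝ) * t^5 + (0:ℝ) * t^6))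
    · exact intervalIntegral.integral_congr fun t _ => by ring
    trans (∫ t in (0:ℝ)..1, ((1*c0) + (1*c1 + (-3)*c0) * t + (1*c2 + (-3)*c1 + 3*c0) * t^2 + ((-3)*c2 + 3*c1 + (-1)*c0) * t^3 + (3*c2 + (-1)*c1) * t^4 + ((-1)*c2) * t^5 + (0:ℝ) * t^6))
    · simp only [intPoly]; try ring
    · exact (intervalIntegral.integral_congr fun t _ => by ring).symm
  · intro c0 c1 c2
    unfold edgeMoment wOrig vhat
    simp only [Prod.mk_sub_mk, Prod.smul_mk, Prod.mk_add_mk, smul_eq_mul]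
    trans (∫ t in (0:ℝ)..1, ((0:ℝ) + (0:ℝ) * t + (0:ℝ) * t^2 + (0:ℝ) * t^3 + (0:ℝ) * t^4 + (0:ℝ) * t^5 + (0:ℝ) * t^6))
    · exact intervalIntegral.integral_congr fun t _ => by ring
    trans (∫ t in (0:ℝ)..1, ((0:ℝ) + (0:ℝ) * t + (0:ℝ) * t^2 + (0:ℝ) * t^3 + (0:ℝ) * t^4 + (0:ℝ) * t^5 + (0:ℝ) * t^6))
    · simp only [intPoly]; try ring
    · exact (intervalIntegral.integral_congr fun t _ => by ring).symm
  · intro a b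
    rw [triInt (fun p => (wOrig p).1 * a + (wOrig p).2 * b) (by unfold wOrig; fun_prop),
        triInt (fun p => (vhat p).1 * a + (vhat p).2 * b) (by unfold vhat; fun_prop)]
    simp only [wOrig, vhat]
    trans (∫ x in (0:ℝ)..1, (((13/280)*b) + (((-22)/35)*b) * x + ((579/280)*b) * x^2 + (((-52)/35)*b) * x^3 + (0:ℝ) * x^4 + (0:ℝ) * x^5 + (0:ℝ) * x^6))
    · apply intervalIntegral.integral_congr; intro x _
      trans (∫ y in (0:ℝ)..(1 - x), (((1/20)*b + ((-3)/5)*x*b + (3/140)*x*a + (3/2)*x^2*b + ((-3)/140)*x^2*a) + (((-3)/140)*b + (3/70)*x*b + ((-3)/70)*x*a) * y + ((3/140)*b) * y^2 + (0:ℝ) * y^3 + (0:ℝ) * y^4 + (0:ℝ) * y^5 + (0:ℝ) * y^6))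
      · exact intervalIntegral.integral_congr fun y _ => by ring
      · rw [intPoly]; ring
    trans (∫ x in (0:ℝ)..1, ((0:ℝ) + (0:ℝ) * x + (0:ℝ) * x^2 + (1*b) * x^3 + ((-1)*b) * x^4 + (0:ℝ) * x^5 + (0:ℝ) * x^6))
    · simp only [intPoly]; try ring
    · symm; apply intervalIntegral.integral_congr; intro x _
      trans (∫ y in (0:ℝ)..(1 - x), ((1*x^3*b) + (0:ℝ) * y + (0:ℝ) * y^2 + (0:ℝ) * y^3 + (0:ℝ) * y^4 + (0:ℝ) * y^5 + (0:ℝ) * y^6))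
      · exact intervalIntegral.integral_congr fun y _ => by ring
      · rw [intPoly]; ring
  · intro γ
    rw [triInt (fun p => (wOrig p).1 * (γ * (zQ p).1) + (wOrig p).2 * (γ * (zQ p).2))
          (by unfold wOrig zQ; fun_prop),
        triInt (fun p => (vhat p).1 * (γ * (zQ p).1) + (vhat p).2 * (γ * (zQ p).2))
          (by unfold vhat zQ; fun_prop)]
    simp only [wOrig, vhat, zQ]
    trans (∫ x in (0:ℝ)..1, ((((-4)/525)*γ) + ((1/7)*γ) * x + (((-249)/280)*γ) * x^2 + ((248/105)*γ) * x^3 + (((-145)/56)*γ) * x^4 + ((687/700)*γ) * x^5 + (0:ℝ) * x^6))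
    · apply intervalIntegral.integral_congr; intro x _
      trans (∫ y in (0:ℝ)..(1 - x), (((3/140)*x^2*γ + ((-3)/70)*x^3*γ + (3/140)*x^4*γ) + (((-1)/20)*γ + (7/10)*x*γ + ((-39)/14)*x^2*γ + (108/35)*x^3*γ) * y + ((1/14)*γ + ((-24)/35)*x*γ + (117/70)*x^2*γ) * y^2 + (((-3)/70)*γ + (3/35)*x*γ) * y^3 + ((3/140)*γ) * y^4 + (0:ℝ) * y^5 + (0:ℝ) * y^6))
      · exact intervalIntegral.integral_congr fun y _ => by ring
      · rw [intPoly]; ring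
    trans (∫ x in (0:ℝ)..1, ((0:ℝ) + (0:ℝ) * x + (0:ℝ) * x^2 + (((-1)/6)*γ) * x^3 + (1*γ) * x^4 + (((-3)/2)*γ) * x^5 + ((2/3)*γ) * x^6))
    · simp only [intPoly]; try ring
    · symm; apply intervalIntegral.integral_congr; intro x _
      trans (∫ y in (0:ℝ)..(1 - x), ((0:ℝ) + ((-1)*x^3*γ + 2*x^4*γ) * y + (1*x^3*γ) * y^2 + (0:ℝ) * y^3 + (0:ℝ) * y^4 + (0:ℝ) * y^5 + (0:ℝ) * y^6))
      · exact intervalIntegral.integral_congr fun y _ => by ring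
      · rw [intPoly]; ring
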